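/- Let G and H be weighted graphs on a finite vertex set V and let f : V → ℝ^m be any mapping of the vertices to real vectors such that Σ_{u,v∈V} H(u,v)·‖f(u) − f(v)‖₁ > 0. Then there exists a cut S ⊆ V with Σ_{u,v} H(u,v)·|1_S(u) − 1_S(v)| > 0 such that (Σ_{u,v} G(u,v)·|1_S(u) − 1_S(v)|) / (Σ_{u,v} H(u,v)·|1_S(u) − 1_S(v)|) ≤ (Σ_{u,v} G(u,v)·‖f(u) − f(v)‖₁) / (Σ_{u,v} H(u,v)·‖f(u) − f(v)‖₁). -/

import Mathlib

/-- Weight of the edges of `G` crossing the cut `(S, V \ S)` (over ordered pairs). -/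
noncomputable def cutval {V : Type*} [Fintype V] [DecidableEq V] (G : V → V → ℝ) (S : Finset V) : ℝ :=
  ∑ u, ∑ v, G u v * |(if u ∈ S then (1 : ℝ) else 0) - (if v ∈ S then (1 : ℝ) else 0)|

/-- The ℓ₁ norm of a vector in `ℝ^m`. -/
noncomputable def l1norm {m : ℕ} (x : Fin m → ℝ) : ℝ := ∑ i, |x i|


/-- Averaging: some index achieves at most the ratio of sums. -/
lemma averaging_lemma {ι : Type*} (s : Finset ι) (A B : ι → ℝ)
    (hA : ∀ k ∈ s, 0 ≤ A k) (hB : ∀ k ∈ s, 0 ≤ B k)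
    (hpos : 0 < ∑ k ∈ s, B k) :
    ∃ k ∈ s, 0 < B k ∧ A k / B k ≤ (∑ k ∈ s, A k) / (∑ k ∈ s, B k) := by
  by_contra hcon
  push_neg at hcon
  set SA := ∑ k ∈ s, A k with hSA
  set SB := ∑ k ∈ s, B k with hSB
  have hSAnn : 0 ≤ SA := Finset.sum_nonneg hA
  have key : ∀ k ∈ s, B k * SA ≤ A k * SB := by
    intro k hk
    rcases eq_or_lt_of_le (hB k hk) with h0 | h0
    · rw [← h0]
      simpa using mul_nonneg (hA k hk) (le_of_lt hpos)
    · have := hcon k hk h0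
      have := (div_lt_div_iff₀ hpos h0).mp this
      nlinarith
  have hstrict : ∃ k ∈ s, B k * SA < A k * SB := by
    have : ∑ k ∈ s, (0:ℝ) < ∑ k ∈ s, B k := by simpa using hpos
    obtain ⟨k, hk, hBk⟩ := Finset.exists_lt_of_sum_lt this
    refine ⟨k, hk, ?_⟩
    have := hcon k hk hBk
    have := (div_lt_div_iff₀ hpos hBk).mp this
    nlinarith
  obtain ⟨k0, hk0, hk0s⟩ := hstrict
  have hlt : ∑ k ∈ s, B k * SA < ∑ k ∈ s, A k * SB :=
    Finset.sum_lt_sum key ⟨k0, hk0, hk0s⟩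
  rw [← Finset.sum_mul, ← Finset.sum_mul] at hlt
  nlinarith

/-- One-dimensional cut decomposition of the line metric on the values of `g`. -/
lemma onedim_decomp {V : Type*} [Fintype V] [DecidableEq V] (g : V → ℝ) :
    ∃ (c : ℕ → ℝ) (S : ℕ → Finset V),
      (∀ k, 0 ≤ c k) ∧
      ∀ u w, |g u - g w| =
        ∑ k ∈ Finset.range (Fintype.card V), c k *
          |(if u ∈ S k then (1:ℝ) else 0) - (if w ∈ S k then (1:ℝ) else 0)| := by
  classical
  set T : Finset ℝ := Finset.image g Finset.univ with hT
  set n : ℕ := T.card with hn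
  set e := T.orderIsoOfFin rfl with he
  set vv : ℕ → ℝ := fun k => if h : k < n then (e ⟨k, h⟩ : ℝ) else 0 with hvv
  have hmem : ∀ x : V, g x ∈ T := fun x => Finset.mem_image_of_mem g (Finset.mem_univ x)
  set idx : V → ℕ := fun x => ((e.symm ⟨g x, hmem x⟩ : Fin n) : ℕ) with hidxdef
  have hidx : ∀ x, idx x < n := fun x => (e.symm ⟨g x, hmem x⟩).isLt
  have hgv : ∀ x, g x = vv (idx x) := by
    intro x
    simp only [hvv, dif_pos (hidx x), hidxdef]
    have : (⟨(e.symm ⟨g x, hmem x⟩ : Fin n), (e.symm ⟨g x, hmem x⟩).isLt⟩ : Fin n)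
        = e.symm ⟨g x, hmem x⟩ := by ext; rfl
    rw [dif_pos (e.symm ⟨g x, hmem x⟩).isLt]
    rw [this, OrderIso.apply_symm_apply]
  have hmono : ∀ a b, a < n → b < n → (vv a ≤ vv b ↔ a ≤ b) := by
    intro a b ha hb
    simp only [hvv, dif_pos ha, dif_pos hb]
    rw [show ((e ⟨a, ha⟩ : T) : ℝ) ≤ ((e ⟨b, hb⟩ : T) : ℝ) ↔ (e ⟨a, ha⟩ ≤ e ⟨b, hb⟩) from Iff.rfl,
      e.le_iff_le]
    exact Fin.mk_le_mk
  set c : ℕ → ℝ := fun k => if k + 1 < n then vv (k+1) - vv k else 0 with hc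
  set S : ℕ → Finset V := fun k => Finset.univ.filter (fun x => g x ≤ vv k) with hS
  have hcnn : ∀ k, 0 ≤ c k := by
    intro k
    simp only [hc]
    split_ifs with h
    · have := (hmono k (k+1) (by omega) h).mpr (by omega)
      linarith
    · exact le_refl 0
  have hnN : n ≤ Fintype.card V := by
    calc n = T.card := rfl
      _ ≤ Finset.univ.card := Finset.card_image_le
      _ = Fintype.card V := Finset.card_univ
  refine ⟨c, S, hcnn, ?_⟩
  -- main claim for ordered indices
  have claim : ∀ u w : V, idx u ≤ idx w →
      |g u - g w| = ∑ k ∈ Finset.range (Fintype.card V), c k *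
        |(if u ∈ S k then (1:ℝ) else 0) - (if w ∈ S k then (1:ℝ) else 0)| := by
    intro u w hij
    set i := idx u
    set j := idx w
    have hi : i < n := hidx u
    have hj : j < n := hidx w
    have hterm : ∀ k ∈ Finset.range (Fintype.card V),
        c k * |(if u ∈ S k then (1:ℝ) else 0) - (if w ∈ S k then (1:ℝ) else 0)|
          = if k ∈ Finset.Ico i j then vv (k+1) - vv k else 0 := by
      intro k _
      by_cases hk1 : k + 1 < n
      · have hkn : k < n := by omega
        have humem : (u ∈ S k) ↔ i ≤ k := by
          simp only [hS, Finset.mem_filter, Finset.mem_univ, true_and]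
          rw [hgv u]; exact hmono i k hi hkn
        have hwmem : (w ∈ S k) ↔ j ≤ k := by
          simp only [hS, Finset.mem_filter, Finset.mem_univ, true_and]
          rw [hgv w]; exact hmono j k hj hkn
        simp only [hc, if_pos hk1, humem, hwmem, Finset.mem_Ico]
        by_cases h1 : i ≤ k
        · by_cases h2 : j ≤ k
          · rw [if_pos h1, if_pos h2, if_neg (by omega)]; simp
          · rw [if_pos h1, if_neg h2, if_pos ⟨h1, by omega⟩]; simp
        · rw [if_neg h1, if_neg (by omega), if_neg (by omega)]; simp
      · have : c k = 0 := by simp [hc, hk1]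
        rw [this, zero_mul]
        rw [if_neg]
        simp only [Finset.mem_Ico]
        omega
    rw [Finset.sum_congr rfl hterm, Finset.sum_ite_mem,
      Finset.inter_eq_right.mpr (by
        intro k hk
        simp only [Finset.mem_Ico] at hk
        simp only [Finset.mem_range]
        omega)]
    rw [Finset.sum_Ico_eq_sub _ hij, Finset.sum_range_sub vv, Finset.sum_range_sub vv]
    rw [hgv u, hgv w]
    have : vv i ≤ vv j := (hmono i j hi hj).mpr hij
    rw [abs_of_nonpos (by linarith)]
    ring
  intro u w
  rcases le_total (idx u) (idx w) with h | h
  · exact claim u w h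
  · rw [abs_sub_comm, claim w u h]
    exact Finset.sum_congr rfl (fun k _ => by rw [abs_sub_comm])


lemma cutval_nonneg {V : Type*} [Fintype V] [DecidableEq V] {G : V → V → ℝ}
    (hG : ∀ u v, 0 ≤ G u v) (S : Finset V) : 0 ≤ cutval G S :=
  Finset.sum_nonneg fun u _ => Finset.sum_nonneg fun v _ =>
    mul_nonneg (hG u v) (abs_nonneg _)

lemma sum_decomp {V : Type*} [Fintype V] [DecidableEq V] (W : V → V → ℝ) (g : V → ℝ)
    (c : ℕ → ℝ) (S : ℕ → Finset V) (N : ℕ)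
    (hid : ∀ u w, |g u - g w| = ∑ k ∈ Finset.range N, c k *
      |(if u ∈ S k then (1:ℝ) else 0) - (if w ∈ S k then (1:ℝ) else 0)|) :
    ∑ u, ∑ v, W u v * |g u - g v| = ∑ k ∈ Finset.range N, c k * cutval W (S k) := by
  simp only [cutval, Finset.mul_sum]
  conv_rhs => rw [Finset.sum_comm]
  refine Finset.sum_congr rfl (fun u _ => ?_)
  conv_rhs => rw [Finset.sum_comm]
  refine Finset.sum_congr rfl (fun v _ => ?_)
  rw [hid u v, Finset.mul_sum]
  exact Finset.sum_congr rfl (fun k _ => by ring)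

/-- Rounding an ℓ₁ embedding to a cut: from any map `f : V → ℝ^m` one can extract a cut whose
sparsity is at most the ratio of the ℓ₁ averages. -/
theorem round_l1_embedding {V : Type*} [Fintype V] [DecidableEq V] (G H : V → V → ℝ)
    (hGsymm : ∀ u v, G u v = G v u) (hGnonneg : ∀ u v, 0 ≤ G u v)
    (hHsymm : ∀ u v, H u v = H v u) (hHnonneg : ∀ u v, 0 ≤ H u v)
    (m : ℕ) (f : V → Fin m → ℝ)
    (hpos : 0 < ∑ u, ∑ v, H u v * l1norm (f u - f v)) :
    ∃ S : Finset V, 0 < cutval H S ∧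
      cutval G S / cutval H S ≤
        (∑ u, ∑ v, G u v * l1norm (f u - f v)) / (∑ u, ∑ v, H u v * l1norm (f u - f v)) := by
  classical
  choose c S hcnn hid using fun i : Fin m => onedim_decomp (fun x => f x i)
  set N := Fintype.card V with hN
  set s : Finset (Fin m × ℕ) := Finset.univ ×ˢ Finset.range N with hs
  have hdecomp : ∀ W : V → V → ℝ,
      ∑ u, ∑ v, W u v * l1norm (f u - f v)
        = ∑ p ∈ s, c p.1 p.2 * cutval W (S p.1 p.2) := by
    intro W
    have l1 : ∀ u v : V, l1norm (f u - f v) = ∑ i, |f u i - f v i| := by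
      intro u v; simp [l1norm, Pi.sub_apply]
    calc ∑ u, ∑ v, W u v * l1norm (f u - f v)
        = ∑ u, ∑ v, ∑ i, W u v * |f u i - f v i| := by
          simp only [l1, Finset.mul_sum]
      _ = ∑ u, ∑ i, ∑ v, W u v * |f u i - f v i| :=
          Finset.sum_congr rfl (fun u _ => by rw [Finset.sum_comm])
      _ = ∑ i, ∑ u, ∑ v, W u v * |f u i - f v i| := by rw [Finset.sum_comm]
      _ = ∑ i, ∑ k ∈ Finset.range N, c i k * cutval W (S i k) :=
          Finset.sum_congr rfl (fun i _ => sum_decomp W _ (c i) (S i) N (hid i))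
      _ = ∑ p ∈ s, c p.1 p.2 * cutval W (S p.1 p.2) := by
          rw [hs, Finset.sum_product]
  have hApos : ∀ p ∈ s, 0 ≤ c p.1 p.2 * cutval G (S p.1 p.2) := fun p _ =>
    mul_nonneg (hcnn p.1 p.2) (cutval_nonneg hGnonneg _)
  have hBpos : ∀ p ∈ s, 0 ≤ c p.1 p.2 * cutval H (S p.1 p.2) := fun p _ =>
    mul_nonneg (hcnn p.1 p.2) (cutval_nonneg hHnonneg _)
  have hsum : 0 < ∑ p ∈ s, c p.1 p.2 * cutval H (S p.1 p.2) := by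
    rw [← hdecomp H]; exact hpos
  obtain ⟨p, hp, hBp, hratio⟩ :=
    averaging_lemma s (fun p => c p.1 p.2 * cutval G (S p.1 p.2))
      (fun p => c p.1 p.2 * cutval H (S p.1 p.2)) hApos hBpos hsum
  have hcutH : 0 < cutval H (S p.1 p.2) := by
    by_contra hcon
    push_neg at hcon
    have : cutval H (S p.1 p.2) = 0 := le_antisymm hcon (cutval_nonneg hHnonneg _)
    rw [this, mul_zero] at hBp
    exact lt_irrefl 0 hBp
  have hcpos : 0 < c p.1 p.2 := by
    nlinarith [hcnn p.1 p.2, cutval_nonneg hHnonneg (S p.1 p.2)]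
  refine ⟨S p.1 p.2, hcutH, ?_⟩
  rw [mul_div_mul_left _ _ (ne_of_gt hcpos)] at hratio
  rw [hdecomp G, hdecomp H]
  exact hratio
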